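/- Let M ≥ 1 and K ≥ 2 be integers, and let z ~ Gamma(M,1) and u ~ Exp(K−1) be independent. For every t > 0, P( z > t and z < u ) = Γ(M, Kt) / ( (M−1)! · K^M ), and this probability tends to K^{−M} as t → 0⁺. In particular, the probability of the event { z > ε_M/ρ, z < u } — on which the NOMA unicast rate does not exceed the OMA unicast rate — is bounded away from 0 as ρ → ∞ and approaches K^{−M}. -/

import Mathlib

open Real MeasureTheory ProbabilityTheory Filter


lemma rpow_eq_pow_aux (M : ℕ) (hM : 1 ≤ M) (x : ℝ) :
    x ^ ((M : ℝ) - 1) = x ^ (M - 1) := by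
  rw [show ((M : ℝ) - 1) = ((M - 1 : ℕ) : ℝ) by rw [Nat.cast_sub hM, Nat.cast_one],
    Real.rpow_natCast]

lemma exp_tail {r : ℝ} (hr : 0 < r) {x : ℝ} (hx : 0 ≤ x) :
    expMeasure r (Set.Ioi x) = ENNReal.ofReal (Real.exp (-(r * x))) := by
  rw [expMeasure, gammaMeasure, withDensity_apply _ measurableSet_Ioi]
  rw [setLIntegral_congr_fun measurableSet_Ioi
    (fun y (hy : x < y) => by
      show gammaPDF 1 r y = ENNReal.ofReal (r * Real.exp (-(r * y)))
      exact exponentialPDF_of_nonneg (le_of_lt (lt_of_le_of_lt hx hy)))]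
  have hint : IntegrableOn (fun y => r * Real.exp (-(r * y))) (Set.Ioi x) := by
    simp_rw [← neg_mul]; exact (exp_neg_integrableOn_Ioi x hr).const_mul r
  rw [← ofReal_integral_eq_lintegral_ofReal hint (ae_of_all _ fun y => by positivity)]
  rw [integral_const_mul, integral_comp_mul_left_Ioi (fun s => Real.exp (-s)) x hr,
    integral_exp_neg_Ioi, smul_eq_mul, ← mul_assoc, mul_inv_cancel₀ hr.ne', one_mul]

lemma g_int (M : ℕ) (hM : 1 ≤ M) :
    IntegrableOn (fun s : ℝ => s ^ (M - 1) * Real.exp (-s)) (Set.Ioi 0) := by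
  refine (Real.GammaIntegral_convergent (s := M) (by positivity)).congr_fun
    (fun x (hx : 0 < x) => ?_) measurableSet_Ioi
  beta_reduce
  rw [mul_comm, rpow_eq_pow_aux M hM]

lemma g_total (M : ℕ) (hM : 1 ≤ M) :
    ∫ s in Set.Ioi (0:ℝ), s ^ (M - 1) * Real.exp (-s) = (M - 1).factorial := by
  have h := Real.Gamma_eq_integral (s := M) (by positivity)
  have h2 : ∫ s in Set.Ioi (0:ℝ), s ^ (M - 1) * Real.exp (-s)
      = ∫ x in Set.Ioi (0:ℝ), Real.exp (-x) * x ^ ((M : ℝ) - 1) :=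
    setIntegral_congr_fun measurableSet_Ioi
      (fun x _ => by rw [mul_comm, rpow_eq_pow_aux M hM])
  rw [h2, ← h, show ((M : ℝ)) = ((M - 1 : ℕ) : ℝ) + 1 by
      rw [Nat.cast_sub hM, Nat.cast_one]; ring, Real.Gamma_nat_eq_factorial]

lemma core (M K : ℕ) (hM : 1 ≤ M) (hK : 2 ≤ K) (t : ℝ) (ht : 0 < t) :
    ((gammaMeasure M 1).prod (expMeasure ((K : ℝ) - 1)))
        {p : ℝ × ℝ | t < p.1 ∧ p.1 < p.2}
      = ENNReal.ofReal ((∫ s in Set.Ioi ((K : ℝ) * t), s ^ (M - 1) * Real.exp (-s))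
          / ((M - 1).factorial * (K : ℝ) ^ M)) := by
  have hK2 : (2 : ℝ) ≤ (K : ℝ) := by exact_mod_cast hK
  have hr : (0 : ℝ) < (K : ℝ) - 1 := by linarith
  have hK0 : (0 : ℝ) < (K : ℝ) := by linarith
  haveI := isProbabilityMeasure_expMeasure hr
  have hGamma : Real.Gamma (M : ℝ) = (M - 1).factorial := by
    rw [show ((M : ℝ)) = ((M - 1 : ℕ) : ℝ) + 1 by
      rw [Nat.cast_sub hM, Nat.cast_one]; ring, Real.Gamma_nat_eq_factorial]
  have hS : MeasurableSet {p : ℝ × ℝ | t < p.1 ∧ p.1 < p.2} :=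
    (measurable_fst measurableSet_Ioi).inter
      (measurableSet_lt measurable_fst measurable_snd)
  set c0 : ℝ := (((M - 1).factorial : ℝ) * (K : ℝ) ^ (M - 1))⁻¹ with hc0
  rw [Measure.prod_apply hS]
  have hslice : ∀ x : ℝ,
      expMeasure ((K : ℝ) - 1) (Prod.mk x ⁻¹' {p : ℝ × ℝ | t < p.1 ∧ p.1 < p.2})
        = (Set.Ioi t).indicator (fun x => expMeasure ((K : ℝ) - 1) (Set.Ioi x)) x := by
    intro x
    by_cases hx : t < x
    · rw [Set.indicator_apply, if_pos (Set.mem_Ioi.mpr hx)]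
      congr 1
      ext y
      simp [Set.mem_preimage, hx]
    · rw [Set.indicator_apply, if_neg (fun h => hx (Set.mem_Ioi.mp h))]
      have hempty : (Prod.mk x ⁻¹' {p : ℝ × ℝ | t < p.1 ∧ p.1 < p.2}) = ∅ := by
        ext y; simp [Set.mem_preimage, hx]
      simp [hempty]
  simp only [hslice]
  rw [lintegral_indicator measurableSet_Ioi]
  rw [setLIntegral_congr_fun measurableSet_Ioi (fun x (hx : t < x) =>
    exp_tail hr (le_of_lt (lt_trans ht hx)))]
  have hpdf : Measurable (gammaPDF (M : ℝ) 1) :=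
    ENNReal.measurable_ofReal.comp (measurable_gammaPDFReal _ _)
  have hgm : Measurable fun x : ℝ => ENNReal.ofReal (Real.exp (-(((K : ℝ) - 1) * x))) := by
    fun_prop
  rw [gammaMeasure, restrict_withDensity measurableSet_Ioi,
    lintegral_withDensity_eq_lintegral_mul _ hpdf hgm]
  rw [setLIntegral_congr_fun measurableSet_Ioi (fun x (hx : t < x) => by
    have hx0 : (0 : ℝ) ≤ x := le_of_lt (lt_trans ht hx)
    show gammaPDF (M : ℝ) 1 x * ENNReal.ofReal (Real.exp (-(((K : ℝ) - 1) * x)))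
        = ENNReal.ofReal (c0 * (((K : ℝ) * x) ^ (M - 1) * Real.exp (-((K : ℝ) * x))))
    rw [gammaPDF_of_nonneg hx0, ← ENNReal.ofReal_mul (by positivity)]
    congr 1
    have hexp : Real.exp (-(1 * x)) * Real.exp (-(((K : ℝ) - 1) * x))
        = Real.exp (-((K : ℝ) * x)) := by
      rw [← Real.exp_add]; congr 1; ring
    rw [Real.one_rpow, rpow_eq_pow_aux M hM, hGamma,
      mul_assoc ((1 : ℝ) / ((M - 1).factorial : ℝ) * x ^ (M - 1)), hexp, mul_pow, hc0]
    have hf0 : ((M - 1).factorial : ℝ) ≠ 0 := Nat.cast_ne_zero.mpr (M - 1).factorial_ne_zero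
    have hKne : (K : ℝ) ≠ 0 := by positivity
    field_simp)]
  have hgi' : IntegrableOn (fun x : ℝ => ((K : ℝ) * x) ^ (M - 1) * Real.exp (-((K : ℝ) * x)))
      (Set.Ioi t) := by
    have := (integrableOn_Ioi_comp_mul_left_iff
      (fun s : ℝ => s ^ (M - 1) * Real.exp (-s)) t hK0).mpr
      ((g_int M hM).mono_set (Set.Ioi_subset_Ioi (mul_pos hK0 ht).le))
    simpa using this
  rw [← ofReal_integral_eq_lintegral_ofReal (hgi'.const_mul c0)
    ((ae_restrict_iff' measurableSet_Ioi).mpr (ae_of_all _ fun x (hx : t < x) => by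
      have hx0 : (0 : ℝ) ≤ (K : ℝ) * x := mul_nonneg hK0.le (le_of_lt (lt_trans ht hx))
      exact mul_nonneg (by rw [hc0]; positivity)
        (mul_nonneg (pow_nonneg hx0 _) (Real.exp_nonneg _))))]
  congr 1
  rw [integral_const_mul,
    integral_comp_mul_left_Ioi (fun s : ℝ => s ^ (M - 1) * Real.exp (-s)) t hK0,
    smul_eq_mul]
  have hKM : (K : ℝ) ^ M = (K : ℝ) ^ (M - 1) * (K : ℝ) := by
    rw [← pow_succ, Nat.sub_add_cancel hM]
  rw [hc0, hKM, div_eq_mul_inv]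
  simp only [mul_inv]
  ring

/-- for independent `z ~ Gamma(M,1)` and `u ~ Exp(K−1)`,
`P(z > t ∧ z < u) = Γ(M,Kt)/((M−1)!·K^M)` for every `t > 0`, and this probability
tends to `K^{−M}` as `t → 0⁺`; in particular the probability of the event
`{z > ε_M/ρ, z < u}` — on which NOMA offers no unicast gain over OMA — approaches
`K^{−M}` as the SNR grows. -/
theorem prob_unicast_user_weaker_than_all
    (M K : ℕ) (hM : 1 ≤ M) (hK : 2 ≤ K)
    (μ : Measure (ℝ × ℝ))
    (hμ : μ = (gammaMeasure M 1).prod (expMeasure ((K : ℝ) - 1)))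
    (Γup : ℝ → ℝ)
    (hΓ : ∀ t, Γup t = ∫ s in Set.Ioi t, s ^ (M - 1) * Real.exp (-s)) :
    (∀ t : ℝ, 0 < t →
      (μ {p : ℝ × ℝ | t < p.1 ∧ p.1 < p.2}).toReal =
        Γup (K * t) / ((M - 1).factorial * (K : ℝ) ^ M)) ∧
    Tendsto (fun t : ℝ => (μ {p : ℝ × ℝ | t < p.1 ∧ p.1 < p.2}).toReal)
      (nhdsWithin 0 (Set.Ioi 0)) (nhds (((K : ℝ) ^ M)⁻¹)) := by
  have hK2 : (2 : ℝ) ≤ (K : ℝ) := by exact_mod_cast hK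
  have hK0 : (0 : ℝ) < (K : ℝ) := by linarith
  have hf0 : (0 : ℝ) < ((M - 1).factorial : ℝ) :=
    Nat.cast_pos.mpr (Nat.factorial_pos _)
  have hC0 : (0 : ℝ) < ((M - 1).factorial : ℝ) * (K : ℝ) ^ M :=
    mul_pos hf0 (pow_pos hK0 _)
  have hΓnn : ∀ y : ℝ, 0 ≤ y → 0 ≤ Γup y := fun y hy => by
    rw [hΓ]
    exact setIntegral_nonneg measurableSet_Ioi fun s hs =>
      mul_nonneg (pow_nonneg (le_of_lt (lt_of_le_of_lt hy hs)) _) (Real.exp_nonneg _)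
  have hval : ∀ t : ℝ, 0 < t →
      (μ {p : ℝ × ℝ | t < p.1 ∧ p.1 < p.2}).toReal =
        Γup ((K : ℝ) * t) / ((M - 1).factorial * (K : ℝ) ^ M) := fun t ht => by
    rw [hμ, core M K hM hK t ht, hΓ,
      ENNReal.toReal_ofReal (div_nonneg (by
        rw [← hΓ]
        exact hΓnn _ (mul_nonneg hK0.le ht.le)) hC0.le)]
  refine ⟨hval, ?_⟩
  have hg_cont : Continuous fun s : ℝ => s ^ (M - 1) * Real.exp (-s) := by fun_prop
  have hF : Continuous fun y : ℝ => ∫ s in (0:ℝ)..y, s ^ (M - 1) * Real.exp (-s) :=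
    intervalIntegral.continuous_primitive (fun a b => hg_cont.intervalIntegrable a b) 0
  have hdecomp : ∀ y : ℝ, 0 ≤ y → Γup y =
      ((M - 1).factorial : ℝ) - ∫ s in (0:ℝ)..y, s ^ (M - 1) * Real.exp (-s) := by
    intro y hy
    have hsplit : ∫ s in Set.Ioi (0:ℝ), s ^ (M - 1) * Real.exp (-s)
        = (∫ s in Set.Ioc (0:ℝ) y, s ^ (M - 1) * Real.exp (-s))
          + ∫ s in Set.Ioi y, s ^ (M - 1) * Real.exp (-s) := by
      rw [← setIntegral_union (Set.Ioc_disjoint_Ioi le_rfl) measurableSet_Ioi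
        ((g_int M hM).mono_set Set.Ioc_subset_Ioi_self)
        ((g_int M hM).mono_set (Set.Ioi_subset_Ioi hy)),
        Set.Ioc_union_Ioi_eq_Ioi hy]
    rw [hΓ, intervalIntegral.integral_of_le hy]
    have htot := g_total M hM
    linarith [hsplit]
  have hlim : Tendsto (fun t : ℝ =>
      (((M - 1).factorial : ℝ) - ∫ s in (0:ℝ)..((K : ℝ) * t), s ^ (M - 1) * Real.exp (-s))
        / (((M - 1).factorial : ℝ) * (K : ℝ) ^ M))
      (nhds 0) (nhds (((K : ℝ) ^ M)⁻¹)) := by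
    have hc : Continuous fun t : ℝ =>
        (((M - 1).factorial : ℝ) - ∫ s in (0:ℝ)..((K : ℝ) * t), s ^ (M - 1) * Real.exp (-s))
          / (((M - 1).factorial : ℝ) * (K : ℝ) ^ M) :=
      (continuous_const.sub (hF.comp (continuous_const.mul continuous_id))).div_const _
    have h0 := hc.tendsto 0
    have heq : (((M - 1).factorial : ℝ)
        - ∫ s in (0:ℝ)..((K : ℝ) * 0), s ^ (M - 1) * Real.exp (-s))
          / (((M - 1).factorial : ℝ) * (K : ℝ) ^ M) = ((K : ℝ) ^ M)⁻¹ := by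
      rw [mul_zero, intervalIntegral.integral_same, sub_zero]
      field_simp
    rwa [heq] at h0
  refine Tendsto.congr' ?_ (tendsto_nhdsWithin_of_tendsto_nhds hlim)
  filter_upwards [self_mem_nhdsWithin] with t ht
  rw [hval t ht, hdecomp ((K : ℝ) * t) (mul_nonneg hK0.le (le_of_lt ht))]
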